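/- Let (X, 𝒜) be a measurable space and h, v : X → X injective bi-measurable maps with {h(X), v(X)} a partition of X. Let B ∈ 𝒜 be such that X = ⋃_{w ∈ ℳ(h,v)} w(B), where ℳ(h,v) is the monoid (including the identity) generated by h and v. If μ and ν are two measures on X, each invariant under h and v (i.e., μ(gA) = μ(A) for g ∈ {h,v} and all measurable A), and μ = ν on all measurable subsets of B, then μ = ν on X. -/

import Mathlib

open MeasureTheory Set

namespace Stmt15Aux

variable {X : Type*}

/-- The word map: a list of booleans acts by composing `h` (true) and `v` (false). -/
def f (h v : X → X) : List Bool → X → X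
  | [] => id
  | (b :: l) => (if b then h else v) ∘ f h v l

lemma f_nil (h v : X → X) : f h v [] = id := rfl

lemma f_cons (h v : X → X) (b : Bool) (l : List Bool) :
    f h v (b :: l) = (if b then h else v) ∘ f h v l := rfl

lemma f_append (h v : X → X) (l l' : List Bool) :
    f h v (l ++ l') = f h v l ∘ f h v l' := by
  induction l with
  | nil => rfl
  | cons b l ih => simp [f_cons, ih, Function.comp_assoc]

lemma f_inj {h v : X → X} (hinj : Function.Injective h) (vinj : Function.Injective v) :
    ∀ l : List Bool, Function.Injective (f h v l)
  | [] => Function.injective_id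
  | (b :: l) => by
      have : Function.Injective (if b then h else v) := by cases b <;> simpa
      exact this.comp (f_inj hinj vinj l)

lemma f_meas {X : Type*} [MeasurableSpace X] {h v : X → X}
    (hmeas : Measurable h) (vmeas : Measurable v) :
    ∀ l : List Bool, Measurable (f h v l)
  | [] => measurable_id
  | (b :: l) => by
      have : Measurable (if b then h else v) := by cases b <;> simpa
      exact this.comp (f_meas hmeas vmeas l)

lemma f_image_meas {X : Type*} [MeasurableSpace X] {h v : X → X}
    (hbi : ∀ A : Set X, MeasurableSet A → MeasurableSet (h '' A))
    (vbi : ∀ A : Set X, MeasurableSet A → MeasurableSet (v '' A)) :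
    ∀ (l : List Bool) (A : Set X), MeasurableSet A → MeasurableSet (f h v l '' A)
  | [], A, hA => by rw [f_nil, Set.image_id]; exact hA
  | (b :: l), A, hA => by
      rw [f_cons, Set.image_comp]
      have h1 := f_image_meas hbi vbi l A hA
      cases b
      · exact vbi _ h1
      · exact hbi _ h1

lemma f_invariant {X : Type*} [MeasurableSpace X] {h v : X → X}
    (hbi : ∀ A : Set X, MeasurableSet A → MeasurableSet (h '' A))
    (vbi : ∀ A : Set X, MeasurableSet A → MeasurableSet (v '' A))
    (μ : Measure X)
    (hμh : ∀ A : Set X, MeasurableSet A → μ (h '' A) = μ A)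
    (hμv : ∀ A : Set X, MeasurableSet A → μ (v '' A) = μ A) :
    ∀ (l : List Bool) (A : Set X), MeasurableSet A → μ (f h v l '' A) = μ A
  | [], A, hA => by rw [f_nil, Set.image_id]
  | (b :: l), A, hA => by
      rw [f_cons, Set.image_comp]
      have h1 := f_image_meas hbi vbi l A hA
      have h2 := f_invariant hbi vbi μ hμh hμv l A hA
      cases b
      · exact (hμv _ h1).trans h2
      · exact (hμh _ h1).trans h2

lemma branch {h v : X → X} (hinj : Function.Injective h) (vinj : Function.Injective v)
    (hdisj : Disjoint (Set.range h) (Set.range v)) (B : Set X) :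
    ∀ w w' : List Bool, ¬ w <+: w' → ¬ w' <+: w →
      Disjoint (f h v w '' B) (f h v w' '' B) := by
  intro w
  induction w with
  | nil => intro w' hp _; exact absurd (List.nil_prefix) hp
  | cons b s ih =>
    intro w' hp hp'
    match w' with
    | [] => exact absurd (List.nil_prefix) hp'
    | (b' :: s') =>
      by_cases hbb : b = b'
      · subst hbb
        have hs : ¬ s <+: s' := fun hh => hp (List.cons_prefix_cons.mpr ⟨rfl, hh⟩)
        have hs' : ¬ s' <+: s := fun hh => hp' (List.cons_prefix_cons.mpr ⟨rfl, hh⟩)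
        have ginj : Function.Injective (if b then h else v) := by cases b <;> simpa
        rw [f_cons, Set.image_comp, f_cons, Set.image_comp]
        exact (Set.disjoint_image_iff ginj).mpr (ih s' hs hs')
      · have hrange : Disjoint (Set.range (if b then h else v))
            (Set.range (if b' then h else v)) := by
          cases b <;> cases b'
          · exact absurd rfl hbb
          · exact hdisj.symm
          · exact hdisj
          · exact absurd rfl hbb
        rw [f_cons, Set.image_comp, f_cons, Set.image_comp]
        exact hrange.mono (Set.image_subset_range _ _) (Set.image_subset_range _ _)

end Stmt15Aux

open Stmt15Aux

/-- Uniqueness of invariant extensions: if X = ⋃_{w ∈ ℳ(h,v)} w(B) and μ, ν are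
{h,v}-invariant measures agreeing on B, then μ = ν. -/
theorem stmt_15 {X : Type*} [MeasurableSpace X] (h v : X → X)
    (hinj : Function.Injective h) (vinj : Function.Injective v)
    (hmeas : Measurable h) (vmeas : Measurable v)
    (hbi : ∀ A : Set X, MeasurableSet A → MeasurableSet (h '' A))
    (vbi : ∀ A : Set X, MeasurableSet A → MeasurableSet (v '' A))
    (hdisj : Disjoint (Set.range h) (Set.range v))
    (hcover : Set.range h ∪ Set.range v = Set.univ)
    (B : Set X) (hB : MeasurableSet B)
    (hBcover : ⋃ w ∈ (Submonoid.closure {(h : Function.End X), v} :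
      Submonoid (Function.End X)), w '' B = Set.univ)
    (μ ν : Measure X)
    (hμh : ∀ A : Set X, MeasurableSet A → μ (h '' A) = μ A)
    (hμv : ∀ A : Set X, MeasurableSet A → μ (v '' A) = μ A)
    (hνh : ∀ A : Set X, MeasurableSet A → ν (h '' A) = ν A)
    (hνv : ∀ A : Set X, MeasurableSet A → ν (v '' A) = ν A)
    (hagree : ∀ A : Set X, MeasurableSet A → A ⊆ B → μ A = ν A) :
    μ = ν := by
  -- every element of the monoid is a word
  have hword : ∀ m ∈ (Submonoid.closure {(h : Function.End X), v} :
      Submonoid (Function.End X)), ∃ l : List Bool, (m : X → X) = f h v l := by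
    intro m hm
    induction hm using Submonoid.closure_induction with
    | mem x hx =>
      rcases hx with hx | hx
      · exact ⟨[true], by subst hx; rfl⟩
      · exact ⟨[false], by subst hx; rfl⟩
    | one => exact ⟨[], rfl⟩
    | mul a b _ _ iha ihb =>
      obtain ⟨la, hla⟩ := iha
      obtain ⟨lb, hlb⟩ := ihb
      exact ⟨la ++ lb, by rw [f_append, ← hla, ← hlb]; rfl⟩
  -- the cover by words
  have hcov : (⋃ l : List Bool, f h v l '' B) = Set.univ := by
    apply Set.eq_univ_of_univ_subset
    rw [← hBcover]
    intro x hx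
    simp only [Set.mem_iUnion] at hx ⊢
    obtain ⟨m, hm, hxm⟩ := hx
    obtain ⟨l, hl⟩ := hword m hm
    exact ⟨l, hl ▸ hxm⟩
  -- the partition
  set T : List Bool → Set X := fun w =>
    f h v w '' B \ ⋃ k, ⋃ (_ : k < w.length), f h v (w.take k) '' B with hT
  have Tmeas : ∀ w, MeasurableSet (T w) := by
    intro w
    exact (f_image_meas hbi vbi w B hB).diff
      (MeasurableSet.iUnion fun k => MeasurableSet.iUnion fun _ =>
        f_image_meas hbi vbi _ B hB)
  have Tsub : ∀ w, T w ⊆ f h v w '' B := fun w => Set.diff_subset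
  have Tdisj : Pairwise (Function.onFun Disjoint T) := by
    intro w w' hww
    rcases Classical.em (w <+: w') with hp | hp
    · -- w is a proper prefix of w'
      have hlen : w.length < w'.length := by
        rcases lt_or_eq_of_le hp.length_le with hlt | heq
        · exact hlt
        · exact absurd ((List.prefix_iff_eq_take.mp hp).trans
            (by rw [heq, List.take_length])) hww
      have : Disjoint (f h v w '' B) (T w') := by
        apply Set.disjoint_right.mpr
        intro x hx
        simp only [hT, Set.mem_diff, Set.mem_iUnion, not_exists] at hx
        have := hx.2 w.length hlen
        rwa [← List.prefix_iff_eq_take.mp hp] at this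
      exact this.mono_left (Tsub w)
    · rcases Classical.em (w' <+: w) with hp' | hp'
      · have hlen : w'.length < w.length := by
          rcases lt_or_eq_of_le hp'.length_le with hlt | heq
          · exact hlt
          · exact absurd (show w' = w by
              rw [List.prefix_iff_eq_take.mp hp', heq, List.take_length])
              (fun hh => hww hh.symm)
        have : Disjoint (T w) (f h v w' '' B) := by
          apply Set.disjoint_left.mpr
          intro x hx
          simp only [hT, Set.mem_diff, Set.mem_iUnion, not_exists] at hx
          have := hx.2 w'.length hlen
          rwa [← List.prefix_iff_eq_take.mp hp'] at this
        exact this.mono_right (Tsub w')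
      · exact (branch hinj vinj hdisj B w w' hp hp').mono (Tsub w) (Tsub w')
  have Tcov : (⋃ w, T w) = Set.univ := by
    apply Set.eq_univ_of_forall
    intro x
    have hx : ∃ n, ∃ w : List Bool, w.length = n ∧ x ∈ f h v w '' B := by
      have : x ∈ ⋃ l : List Bool, f h v l '' B := hcov ▸ Set.mem_univ x
      simp only [Set.mem_iUnion] at this
      obtain ⟨l, hl⟩ := this
      exact ⟨l.length, l, rfl, hl⟩
    classical
    obtain ⟨w, hwlen, hwx⟩ := Nat.find_spec hx
    refine Set.mem_iUnion.mpr ⟨w, hwx, ?_⟩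
    simp only [Set.mem_iUnion, not_exists]
    intro k hk hmem
    have : Nat.find hx ≤ k := Nat.find_le ⟨w.take k, by
      rw [List.length_take]; exact min_eq_left hk.le, hmem⟩
    omega
  -- measures agree on each piece
  have key : ∀ (A : Set X), MeasurableSet A → ∀ w, μ (A ∩ T w) = ν (A ∩ T w) := by
    intro A hA w
    set S := f h v w ⁻¹' (A ∩ T w) ∩ B with hS
    have hSmeas : MeasurableSet S :=
      ((hA.inter (Tmeas w)).preimage (f_meas hmeas vmeas w)).inter hB
    have hSB : S ⊆ B := Set.inter_subset_right
    have himg : A ∩ T w = f h v w '' S := by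
      apply Set.Subset.antisymm
      · intro x hx
        obtain ⟨b, hb, hbx⟩ := (Tsub w) hx.2
        exact ⟨b, ⟨by rw [Set.mem_preimage, hbx]; exact hx, hb⟩, hbx⟩
      · intro x hx
        obtain ⟨b, hb, hbx⟩ := hx
        rw [← hbx]
        exact hb.1
    rw [himg, f_invariant hbi vbi μ hμh hμv w S hSmeas,
      f_invariant hbi vbi ν hνh hνv w S hSmeas]
    exact hagree S hSmeas hSB
  -- conclude
  ext A hA
  have hAdecomp : A = ⋃ w, A ∩ T w := by
    rw [← Set.inter_iUnion, Tcov, Set.inter_univ]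
  have hdisjA : Pairwise (Function.onFun Disjoint (fun w => A ∩ T w)) :=
    fun w w' hww => (Tdisj hww).mono Set.inter_subset_right Set.inter_subset_right
  have hmeasA : ∀ w, MeasurableSet (A ∩ T w) := fun w => hA.inter (Tmeas w)
  calc μ A = μ (⋃ w, A ∩ T w) := by rw [← hAdecomp]
    _ = ∑' w, μ (A ∩ T w) := measure_iUnion hdisjA hmeasA
    _ = ∑' w, ν (A ∩ T w) := by simp_rw [fun w => key A hA w]
    _ = ν (⋃ w, A ∩ T w) := (measure_iUnion hdisjA hmeasA).symm
    _ = ν A := by rw [← hAdecomp]
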